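/- For every γ > 0 there exists a unique γ' > 0 such that ψ(γ') = ψ(γ)², and this γ' satisfies γ' < γ. (In other words, Ξ(γ) = ψ⁻¹(ψ²(γ)) is well defined and Ξ(γ) < γ for all γ > 0.) -/

import Mathlib

set_option maxHeartbeats 1000000

open Real Filter MeasureTheory

/-- ψ(γ) = E[tanh(L/2)] for L ~ N(γ, 2γ). -/
noncomputable def psi (γ : ℝ) : ℝ :=
  ∫ x : ℝ, Real.tanh (x / 2) * (1 / Real.sqrt (4 * Real.pi * γ)) *
    Real.exp (-(x - γ) ^ 2 / (4 * γ))

open Real Filter MeasureTheory Set Topology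

namespace PsiAux

/-! ### tanh facts -/

lemma tanh_lt_one (x : ℝ) : Real.tanh x < 1 := by
  rw [Real.tanh_eq_sinh_div_cosh, div_lt_one (Real.cosh_pos x)]
  exact Real.sinh_lt_cosh x

lemma neg_one_lt_tanh (x : ℝ) : -1 < Real.tanh x := by
  have h := tanh_lt_one (-x)
  rw [Real.tanh_neg] at h; linarith

lemma abs_tanh_le_one (x : ℝ) : |Real.tanh x| ≤ 1 :=
  le_of_lt (abs_lt.2 ⟨neg_one_lt_tanh x, tanh_lt_one x⟩)

lemma tanh_eq : Real.tanh = fun y => Real.sinh y / Real.cosh y :=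
  funext fun y => Real.tanh_eq_sinh_div_cosh (x := y)

lemma hasDerivAt_tanh (x : ℝ) : HasDerivAt Real.tanh (1 - Real.tanh x ^ 2) x := by
  have h : HasDerivAt (fun y => Real.sinh y / Real.cosh y)
      ((Real.cosh x * Real.cosh x - Real.sinh x * Real.sinh x) / Real.cosh x ^ 2) x :=
    (Real.hasDerivAt_sinh x).div (Real.hasDerivAt_cosh x) (ne_of_gt (Real.cosh_pos x))
  have hval : (Real.cosh x * Real.cosh x - Real.sinh x * Real.sinh x) / Real.cosh x ^ 2
      = 1 - Real.tanh x ^ 2 := by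
    rw [Real.tanh_eq_sinh_div_cosh]
    have hc := (Real.cosh_pos x).ne'
    field_simp
  have h2 : HasDerivAt (fun y => Real.sinh y / Real.cosh y) (1 - Real.tanh x ^ 2) x :=
    hval ▸ h
  exact h2.congr_of_eventuallyEq (Eventually.of_forall fun y => Real.tanh_eq_sinh_div_cosh (x := y))

lemma continuous_tanh : Continuous Real.tanh := by
  rw [tanh_eq]
  exact Real.continuous_sinh.div Real.continuous_cosh fun x => (Real.cosh_pos x).ne'

/-! ### the standard gaussian density -/

noncomputable def gph (z : ℝ) : ℝ := (Real.sqrt (2 * Real.pi))⁻¹ * Real.exp (-z ^ 2 / 2)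

lemma gph_pos (z : ℝ) : 0 < gph z := by
  have h : 0 < Real.sqrt (2 * Real.pi) := Real.sqrt_pos.2 (by positivity)
  exact mul_pos (inv_pos.2 h) (Real.exp_pos _)

lemma gph_eq (z : ℝ) : gph z = (Real.sqrt (2 * Real.pi))⁻¹ * Real.exp (-(1/2) * z ^ 2) := by
  rw [gph]; ring_nf

lemma integrable_gph : Integrable gph := by
  have h : Integrable fun z : ℝ => Real.exp (-(1/2 : ℝ) * z ^ 2) :=
    integrable_exp_neg_mul_sq (by norm_num)
  have := h.const_mul (Real.sqrt (2 * Real.pi))⁻¹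
  exact this.congr (Eventually.of_forall fun z => (gph_eq z).symm)

lemma integral_gph : ∫ z, gph z = 1 := by
  have h : ∫ z : ℝ, Real.exp (-(1/2 : ℝ) * z ^ 2) = Real.sqrt (Real.pi / (1/2)) :=
    integral_gaussian (1/2)
  have h2 : Real.pi / (1/2 : ℝ) = 2 * Real.pi := by ring
  have hpos : 0 < Real.sqrt (2 * Real.pi) := Real.sqrt_pos.2 (by positivity)
  calc ∫ z, gph z = ∫ z, (Real.sqrt (2 * Real.pi))⁻¹ * Real.exp (-(1/2 : ℝ) * z ^ 2) := by
        congr 1; funext z; exact gph_eq z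
    _ = (Real.sqrt (2 * Real.pi))⁻¹ * ∫ z : ℝ, Real.exp (-(1/2 : ℝ) * z ^ 2) :=
        integral_const_mul _ _
    _ = 1 := by rw [h, h2]; field_simp

lemma continuous_gph : Continuous gph := by
  apply Continuous.mul continuous_const
  exact Real.continuous_exp.comp (by continuity)

lemma integrable_bdd_mul_gph {h : ℝ → ℝ} (hc : Continuous h) (C : ℝ) (hb : ∀ z, |h z| ≤ C) :
    Integrable fun z => h z * gph z :=
  integrable_gph.bdd_mul hc.aestronglyMeasurable (Eventually.of_forall fun z => by simpa using hb z)

lemma integrable_abs_mul_gph : Integrable fun z : ℝ => |z| * gph z := by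
  have h : Integrable fun z : ℝ => z * Real.exp (-(1/2 : ℝ) * z ^ 2) :=
    integrable_mul_exp_neg_mul_sq (by norm_num)
  have h2 := (h.abs.const_mul (Real.sqrt (2 * Real.pi))⁻¹)
  apply h2.congr
  apply Eventually.of_forall
  intro z
  show (Real.sqrt (2 * Real.pi))⁻¹ * |z * Real.exp (-(1/2 : ℝ) * z ^ 2)| = |z| * gph z
  rw [abs_mul, abs_of_pos (Real.exp_pos _), gph_eq]
  ring

lemma integrable_mul_bdd_mul_gph {h : ℝ → ℝ} (hc : Continuous h) (C : ℝ)
    (hb : ∀ z, |h z| ≤ C) : Integrable fun z => z * (h z * gph z) := by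
  have hC : 0 ≤ C := le_trans (abs_nonneg _) (hb 0)
  apply Integrable.mono' (integrable_abs_mul_gph.const_mul C)
  · exact (continuous_id.mul (hc.mul continuous_gph)).aestronglyMeasurable
  · apply Eventually.of_forall
    intro z
    have : |z * (h z * gph z)| = |z| * (|h z| * gph z) := by
      rw [abs_mul, abs_mul, abs_of_pos (gph_pos z)]
    rw [Real.norm_eq_abs, this]
    calc |z| * (|h z| * gph z) ≤ |z| * (C * gph z) := by
          apply mul_le_mul_of_nonneg_left _ (abs_nonneg z)
          exact mul_le_mul_of_nonneg_right (hb z) (gph_pos z).le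
      _ = C * (|z| * gph z) := by ring

lemma tendsto_gph_atTop : Tendsto gph atTop (𝓝 0) := by
  have h1 : Tendsto (fun z : ℝ => -z ^ 2 / 2) atTop atBot := by
    apply Tendsto.atBot_div_const (by norm_num : (0:ℝ) < 2)
    exact tendsto_neg_atBot_iff.2 (tendsto_pow_atTop (by norm_num))
  have h2 : Tendsto (fun z : ℝ => Real.exp (-z ^ 2 / 2)) atTop (𝓝 0) :=
    Real.tendsto_exp_atBot.comp h1
  have h3 := h2.const_mul (Real.sqrt (2 * Real.pi))⁻¹
  rw [mul_zero] at h3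
  exact h3.congr fun z => rfl

lemma tendsto_gph_atBot : Tendsto gph atBot (𝓝 0) := by
  have h : Tendsto (fun z : ℝ => gph (-z)) atTop (𝓝 0) := by
    have : (fun z : ℝ => gph (-z)) = gph := by funext z; simp [gph]
    rw [this]; exact tendsto_gph_atTop
  have h2 := h.comp tendsto_neg_atBot_atTop
  exact h2.congr fun z => by simp

lemma hasDerivAt_gph (z : ℝ) : HasDerivAt gph (-z * gph z) z := by
  have h : HasDerivAt (fun z : ℝ => -z ^ 2 / 2) (-z) z := by
    have : HasDerivAt (fun x : ℝ => -x ^ 2 / 2) (-((2:ℕ) * z ^ (2 - 1)) / 2) z :=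
      ((hasDerivAt_pow 2 z).neg).div_const 2
    convert this using 1
    simp; ring
  have h2 := (Real.hasDerivAt_exp (-z ^ 2 / 2)).comp z h
  have h3 : HasDerivAt gph ((Real.sqrt (2 * Real.pi))⁻¹ * (Real.exp (-z ^ 2 / 2) * -z)) z :=
    h2.const_mul (Real.sqrt (2 * Real.pi))⁻¹
  convert h3 using 1
  rw [gph]; ring

/-! ### Stein's identity -/

lemma stein {H H' : ℝ → ℝ} (hd : ∀ z, HasDerivAt H (H' z) z)
    {C C' : ℝ} (hb : ∀ z, |H z| ≤ C) (hb' : ∀ z, |H' z| ≤ C') :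
    ∫ z, H' z * gph z = ∫ z, z * (H z * gph z) := by
  have hHc : Continuous H := continuous_iff_continuousAt.2 fun z => (hd z).continuousAt
  have hH'm : AEStronglyMeasurable H' (volume : Measure ℝ) :=
    (measurable_deriv H).aestronglyMeasurable.congr
      (Eventually.of_forall fun z => (hd z).deriv)
  have int1 : Integrable fun z => H' z * gph z :=
    integrable_gph.bdd_mul hH'm (Eventually.of_forall fun z => by simpa using hb' z)
  have int2 : Integrable fun z => z * (H z * gph z) :=
    integrable_mul_bdd_mul_gph hHc C hb
  set P : ℝ → ℝ := fun z => H z * gph z with hPdef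
  set Q : ℝ → ℝ := fun z => H' z * gph z - z * (H z * gph z) with hQdef
  have hP : ∀ z, HasDerivAt P (Q z) z := by
    intro z
    have h : HasDerivAt (fun y => H y * gph y) (H' z * gph z + H z * (-z * gph z)) z :=
      (hd z).mul (hasDerivAt_gph z)
    convert h using 1
    simp only [hQdef]; ring
  have hQint : Integrable Q := int1.sub int2
  have hnorm : ∀ z, ‖P z‖ ≤ C * gph z := by
    intro z
    rw [Real.norm_eq_abs, hPdef, abs_mul, abs_of_pos (gph_pos z)]
    exact mul_le_mul_of_nonneg_right (hb z) (gph_pos z).le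
  have htopP : Tendsto P atTop (𝓝 0) :=
    squeeze_zero_norm hnorm (by simpa using (tendsto_gph_atTop.const_mul C))
  have hbotP : Tendsto P atBot (𝓝 0) :=
    squeeze_zero_norm hnorm (by simpa using (tendsto_gph_atBot.const_mul C))
  have htop : ∫ z in Ioi (0:ℝ), Q z = 0 - P 0 :=
    integral_Ioi_of_hasDerivAt_of_tendsto' (fun x _ => hP x) hQint.integrableOn htopP
  have hbot : ∫ z in Iic (0:ℝ), Q z = P 0 - 0 :=
    integral_Iic_of_hasDerivAt_of_tendsto' (fun x _ => hP x) hQint.integrableOn hbotP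
  have hzero : ∫ z, Q z = 0 := by
    rw [← intervalIntegral.integral_Iic_add_Ioi hQint.integrableOn hQint.integrableOn, htop, hbot]
    ring
  have hsub : ∫ z, Q z = (∫ z, H' z * gph z) - ∫ z, z * (H z * gph z) :=
    integral_sub int1 int2
  rw [hsub] at hzero
  linarith


/-! ### change of variables -/

lemma psi_z_rep {γ : ℝ} (hγ : 0 < γ) :
    psi γ = ∫ z, Real.tanh (γ / 2 + Real.sqrt (2 * γ) / 2 * z) * gph z := by
  set a := Real.sqrt (2 * γ) with ha_def
  have ha : 0 < a := Real.sqrt_pos.2 (by linarith)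
  set f : ℝ → ℝ := fun x => Real.tanh (x / 2) * (1 / Real.sqrt (4 * Real.pi * γ)) *
    Real.exp (-(x - γ) ^ 2 / (4 * γ)) with hf_def
  have step1 : psi γ = ∫ x, f (x + γ) := (integral_add_right_eq_self f γ).symm
  have step2 : (∫ z : ℝ, f (a * z + γ)) = |a⁻¹| • ∫ x, f (x + γ) :=
    MeasureTheory.Measure.integral_comp_mul_left (fun x => f (x + γ)) a
  have step3 : (∫ x, f (x + γ)) = a • ∫ z : ℝ, f (a * z + γ) := by
    rw [step2, smul_smul, abs_of_pos (inv_pos.2 ha), mul_inv_cancel₀ ha.ne', one_smul]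
  rw [step1, step3, ← integral_smul]
  congr 1
  funext z
  have hsq : a ^ 2 = 2 * γ := Real.sq_sqrt (by linarith)
  have hexp : -(a * z + γ - γ) ^ 2 / (4 * γ) = -z ^ 2 / 2 := by
    have : (a * z + γ - γ) ^ 2 = 2 * γ * z ^ 2 := by
      rw [show a * z + γ - γ = a * z by ring, mul_pow, hsq]
    rw [this]
    field_simp
    ring
  have hsqrt : Real.sqrt (4 * Real.pi * γ) = Real.sqrt (2 * Real.pi) * a := by
    rw [ha_def, ← Real.sqrt_mul (by positivity : (0:ℝ) ≤ 2 * Real.pi)]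
    norm_num
    ring_nf
  have harg : (a * z + γ) / 2 = γ / 2 + a / 2 * z := by ring
  rw [hf_def]
  simp only [smul_eq_mul]
  rw [hexp, hsqrt, harg, gph]
  have h2 : (0:ℝ) < Real.sqrt (2 * Real.pi) := Real.sqrt_pos.2 (by positivity)
  field_simp

/-! ### derivative of the inner map and of the integrand -/

lemma F_hasDerivAt (z : ℝ) {γ : ℝ} (hγ : 0 < γ) :
    HasDerivAt (fun g => Real.tanh (g / 2 + Real.sqrt (2 * g) / 2 * z) * gph z)
      ((1 - Real.tanh (γ / 2 + Real.sqrt (2 * γ) / 2 * z) ^ 2) *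
        (1 / 2 + z / (2 * Real.sqrt (2 * γ))) * gph z) γ := by
  have hs : (0:ℝ) < Real.sqrt (2 * γ) := Real.sqrt_pos.2 (by linarith)
  have h1 : HasDerivAt (fun g : ℝ => 2 * g) 2 γ := by
    simpa using (hasDerivAt_id γ).const_mul (2:ℝ)
  have h2 : HasDerivAt (fun g => Real.sqrt (2 * g)) (1 / (2 * Real.sqrt (2 * γ)) * 2) γ :=
    (Real.hasDerivAt_sqrt (by positivity)).comp γ h1
  have h3 : HasDerivAt (fun g => g / 2 + Real.sqrt (2 * g) / 2 * z)
      (1 / 2 + z / (2 * Real.sqrt (2 * γ))) γ := by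
    have ha := (hasDerivAt_id γ).div_const 2
    have hb := (h2.div_const 2).mul_const z
    have hab : HasDerivAt (fun g => g / 2 + Real.sqrt (2 * g) / 2 * z)
        (1 / 2 + 1 / (2 * Real.sqrt (2 * γ)) * 2 / 2 * z) γ := ha.add hb
    convert hab using 1
    ring
  have h4 := (hasDerivAt_tanh (γ / 2 + Real.sqrt (2 * γ) / 2 * z)).comp γ h3
  exact h4.mul_const (gph z)

/-! ### the derivative formula -/

lemma psi_hasDerivAt {γ₀ : ℝ} (h : 0 < γ₀) :
    HasDerivAt psi
      (∫ z, (1 - Real.tanh (γ₀ / 2 + Real.sqrt (2 * γ₀) / 2 * z)) *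
        (1 - Real.tanh (γ₀ / 2 + Real.sqrt (2 * γ₀) / 2 * z) ^ 2) / 2 * gph z) γ₀ := by
  have hs0 : (0:ℝ) < Real.sqrt γ₀ := Real.sqrt_pos.2 h
  set F : ℝ → ℝ → ℝ := fun γ z => Real.tanh (γ / 2 + Real.sqrt (2 * γ) / 2 * z) * gph z
    with hF_def
  set F' : ℝ → ℝ → ℝ := fun γ z =>
    (1 - Real.tanh (γ / 2 + Real.sqrt (2 * γ) / 2 * z) ^ 2) *
      (1 / 2 + z / (2 * Real.sqrt (2 * γ))) * gph z with hF'_def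
  have hconta : ∀ γ : ℝ, Continuous fun z => γ / 2 + Real.sqrt (2 * γ) / 2 * z := by
    intro γ; continuity
  have hmeas : ∀ γ : ℝ, AEStronglyMeasurable (F γ) volume := by
    intro γ
    exact ((continuous_tanh.comp (hconta γ)).mul continuous_gph).aestronglyMeasurable
  have hint : Integrable (F γ₀) :=
    integrable_bdd_mul_gph (continuous_tanh.comp (hconta γ₀)) 1 fun z => abs_tanh_le_one _
  have h'meas : AEStronglyMeasurable (F' γ₀) volume := by
    apply Continuous.aestronglyMeasurable
    apply Continuous.mul _ continuous_gph
    apply Continuous.mul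
    · exact continuous_const.sub ((continuous_tanh.comp (hconta γ₀)).pow 2)
    · continuity
  set bound : ℝ → ℝ := fun z => (1 / 2 + |z| / (2 * Real.sqrt γ₀)) * gph z with hbound_def
  have hboundint : Integrable bound := by
    have h1 := integrable_gph.const_mul (1/2 : ℝ)
    have h2 := integrable_abs_mul_gph.const_mul (1 / (2 * Real.sqrt γ₀))
    apply (h1.add h2).congr
    apply Eventually.of_forall
    intro z
    show 1/2 * gph z + 1 / (2 * Real.sqrt γ₀) * (|z| * gph z) = bound z
    rw [hbound_def]
    field_simp
  have hball : ∀ γ ∈ Metric.ball γ₀ (γ₀ / 2), (0:ℝ) < γ ∧ Real.sqrt γ₀ ≤ Real.sqrt (2 * γ) := by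
    intro γ hγ
    rw [Metric.mem_ball, Real.dist_eq, abs_lt] at hγ
    constructor
    · linarith
    · apply Real.sqrt_le_sqrt; linarith
  have h_bound : ∀ᵐ z : ℝ, ∀ γ ∈ Metric.ball γ₀ (γ₀ / 2), ‖F' γ z‖ ≤ bound z := by
    apply Eventually.of_forall
    intro z γ hγ
    obtain ⟨hγpos, hsle⟩ := hball γ hγ
    have hs : (0:ℝ) < Real.sqrt (2 * γ) := lt_of_lt_of_le hs0 hsle
    set u := Real.tanh (γ / 2 + Real.sqrt (2 * γ) / 2 * z) with hu
    have hu1 : |u| ≤ 1 := abs_tanh_le_one _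
    have husq : 0 ≤ 1 - u ^ 2 := by nlinarith [abs_le.1 hu1]
    have husq' : 1 - u ^ 2 ≤ 1 := by nlinarith [sq_nonneg u]
    rw [Real.norm_eq_abs, hF'_def]
    have e1 : |(1 - u ^ 2) * (1 / 2 + z / (2 * Real.sqrt (2 * γ))) * gph z|
        = (1 - u ^ 2) * |1 / 2 + z / (2 * Real.sqrt (2 * γ))| * gph z := by
      rw [abs_mul, abs_mul, abs_of_nonneg husq, abs_of_pos (gph_pos z)]
    rw [e1]
    have e2 : |1 / 2 + z / (2 * Real.sqrt (2 * γ))| ≤ 1 / 2 + |z| / (2 * Real.sqrt γ₀) := by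
      have ha1 := abs_add_le (1/2 : ℝ) (z / (2 * Real.sqrt (2 * γ)))
      have hhalf : |(1:ℝ)/2| = 1/2 := by rw [abs_of_nonneg]; norm_num
      have hb1 : |z / (2 * Real.sqrt (2 * γ))| = |z| / (2 * Real.sqrt (2 * γ)) := by
        rw [abs_div, abs_of_pos (by positivity : (0:ℝ) < 2 * Real.sqrt (2 * γ))]
      have hinv : (2 * Real.sqrt (2 * γ))⁻¹ ≤ (2 * Real.sqrt γ₀)⁻¹ :=
        inv_anti₀ (by positivity) (by linarith)
      have ha2 : |z| / (2 * Real.sqrt (2 * γ)) ≤ |z| / (2 * Real.sqrt γ₀) := by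
        rw [div_eq_mul_inv, div_eq_mul_inv]
        exact mul_le_mul_of_nonneg_left hinv (abs_nonneg z)
      rw [hhalf, hb1] at ha1
      linarith
    calc (1 - u ^ 2) * |1 / 2 + z / (2 * Real.sqrt (2 * γ))| * gph z
        ≤ 1 * (1 / 2 + |z| / (2 * Real.sqrt γ₀)) * gph z := by
          apply mul_le_mul_of_nonneg_right _ (gph_pos z).le
          exact mul_le_mul husq' e2 (abs_nonneg _) zero_le_one
      _ = bound z := by rw [hbound_def, one_mul]
  have h_diff : ∀ᵐ z : ℝ, ∀ γ ∈ Metric.ball γ₀ (γ₀ / 2), HasDerivAt (F · z) (F' γ z) γ := by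
    apply Eventually.of_forall
    intro z γ hγ
    exact F_hasDerivAt z (hball γ hγ).1
  have main := hasDerivAt_integral_of_dominated_loc_of_deriv_le (Metric.ball_mem_nhds γ₀ (half_pos h))
    (Eventually.of_forall hmeas) hint h'meas h_bound hboundint h_diff
  have hD : HasDerivAt (fun γ => ∫ z, F γ z) (∫ z, F' γ₀ z) γ₀ := main.2
  have hpsi_eq : psi =ᶠ[nhds γ₀] fun γ => ∫ z, F γ z := by
    filter_upwards [Ioi_mem_nhds h] with γ hγ
    exact psi_z_rep hγ
  have hD2 : HasDerivAt psi (∫ z, F' γ₀ z) γ₀ := hD.congr_of_eventuallyEq hpsi_eq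
  -- now rewrite the derivative value
  convert hD2 using 1
  -- Stein's identity setup
  set s := Real.sqrt (2 * γ₀) with hs_def
  have hs : (0:ℝ) < s := Real.sqrt_pos.2 (by linarith)
  set t : ℝ → ℝ := fun z => Real.tanh (γ₀ / 2 + s / 2 * z) with ht_def
  have htc : Continuous t := continuous_tanh.comp (by continuity)
  have htb : ∀ z, |t z| ≤ 1 := fun z => abs_tanh_le_one _
  have htsq : ∀ z, 0 ≤ 1 - t z ^ 2 := by intro z; nlinarith [abs_le.1 (htb z)]
  have htsq' : ∀ z, 1 - t z ^ 2 ≤ 1 := by intro z; nlinarith [sq_nonneg (t z)]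
  set H : ℝ → ℝ := fun z => 1 - t z ^ 2 with hH_def
  set H' : ℝ → ℝ := fun z => -2 * t z * (1 - t z ^ 2) * (s / 2) with hH'_def
  have hd : ∀ z, HasDerivAt H (H' z) z := by
    intro z
    have hin : HasDerivAt (fun z : ℝ => γ₀ / 2 + s / 2 * z) (s / 2) z := by
      simpa using ((hasDerivAt_id z).const_mul (s / 2)).const_add (γ₀ / 2)
    have ht' : HasDerivAt t ((1 - t z ^ 2) * (s / 2)) z := by
      have := (hasDerivAt_tanh (γ₀ / 2 + s / 2 * z)).comp z hin; exact this
    have hpow : HasDerivAt (fun y => t y ^ 2) ((2:ℕ) * t z ^ (2 - 1) * ((1 - t z ^ 2) * (s / 2))) z :=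
      ht'.pow 2
    have hfin : HasDerivAt (fun y => 1 - t y ^ 2)
        (-((2:ℕ) * t z ^ (2 - 1) * ((1 - t z ^ 2) * (s / 2)))) z := hpow.const_sub 1
    convert hfin using 1
    simp only [hH'_def]
    ring
  have hb : ∀ z, |H z| ≤ 1 := by
    intro z
    rw [hH_def, abs_of_nonneg (htsq z)]
    exact htsq' z
  have hb' : ∀ z, |H' z| ≤ s := by
    intro z
    rw [hH'_def]
    have h1 : |(-2 : ℝ) * t z * (1 - t z ^ 2) * (s / 2)|
        = 2 * |t z| * (1 - t z ^ 2) * (s / 2) := by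
      rw [abs_mul, abs_mul, abs_mul, abs_of_nonneg (htsq z), abs_of_pos (half_pos hs)]
      norm_num
    rw [h1]
    have hm : |t z| * (1 - t z ^ 2) ≤ 1 := by
      nlinarith [htb z, htsq z, htsq' z, abs_nonneg (t z)]
    calc 2 * |t z| * (1 - t z ^ 2) * (s / 2) = |t z| * (1 - t z ^ 2) * s := by ring
      _ ≤ 1 * s := mul_le_mul_of_nonneg_right hm hs.le
      _ = s := one_mul s
  have hstein := stein hd hb hb'
  -- integrability of pieces
  have int_t2 : Integrable fun z => (1 - t z ^ 2) * gph z :=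
    integrable_bdd_mul_gph (continuous_const.sub (htc.pow 2)) 1
      (fun z => by rw [abs_of_nonneg (htsq z)]; exact htsq' z)
  have int_t3 : Integrable fun z => t z * (1 - t z ^ 2) * gph z :=
    integrable_bdd_mul_gph (htc.mul (continuous_const.sub (htc.pow 2))) 1
      (fun z => by
        rw [abs_mul, abs_of_nonneg (htsq z)]
        nlinarith [htb z, htsq z, htsq' z, abs_nonneg (t z)])
  have int_z : Integrable fun z => z * ((1 - t z ^ 2) * gph z) :=
    integrable_mul_bdd_mul_gph (continuous_const.sub (htc.pow 2)) 1
      (fun z => by rw [abs_of_nonneg (htsq z)]; exact htsq' z)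
  -- hstein : ∫ H' * gph = ∫ z * (H z * gph z)
  have hZval : ∫ z : ℝ, z * ((1 - t z ^ 2) * gph z) = -s * ∫ z, t z * (1 - t z ^ 2) * gph z := by
    rw [← hstein]
    rw [← integral_const_mul]
    congr 1
    funext z
    simp only [hH'_def]
    ring
  have hsplit : ∫ z, F' γ₀ z
      = (1/2) * (∫ z, (1 - t z ^ 2) * gph z) + (1 / (2 * s)) * ∫ z, z * ((1 - t z ^ 2) * gph z) := by
    rw [← integral_const_mul, ← integral_const_mul, ← integral_add
      (int_t2.const_mul _) (int_z.const_mul _)]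
    congr 1
    funext z
    simp only [hF'_def, ht_def, hs_def]
    field_simp
  rw [hsplit, hZval]
  have hfinal : (1/2) * (∫ z, (1 - t z ^ 2) * gph z)
      + (1 / (2 * s)) * (-s * ∫ z, t z * (1 - t z ^ 2) * gph z)
      = (1/2) * (∫ z, (1 - t z ^ 2) * gph z) - (1/2) * ∫ z, t z * (1 - t z ^ 2) * gph z := by
    field_simp
    ring
  rw [hfinal, ← integral_const_mul, ← integral_const_mul, ← integral_sub
    (int_t2.const_mul _) (int_t3.const_mul _)]
  congr 1
  funext z
  simp only [ht_def, hs_def]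
  ring

/-! ### positivity of the derivative -/

lemma deriv_pos {γ₀ : ℝ} (h : 0 < γ₀) :
    0 < ∫ z, (1 - Real.tanh (γ₀ / 2 + Real.sqrt (2 * γ₀) / 2 * z)) *
      (1 - Real.tanh (γ₀ / 2 + Real.sqrt (2 * γ₀) / 2 * z) ^ 2) / 2 * gph z := by
  set t : ℝ → ℝ := fun z => Real.tanh (γ₀ / 2 + Real.sqrt (2 * γ₀) / 2 * z) with ht_def
  have htc : Continuous t := continuous_tanh.comp (by continuity)
  have hpos : ∀ z, 0 < (1 - t z) * (1 - t z ^ 2) / 2 * gph z := by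
    intro z
    have h1 : t z < 1 := tanh_lt_one _
    have h2 : -1 < t z := neg_one_lt_tanh _
    have h3 : 0 < 1 - t z ^ 2 := by nlinarith
    exact mul_pos (div_pos (mul_pos (by linarith) h3) two_pos) (gph_pos z)
  have hint : Integrable fun z => (1 - t z) * (1 - t z ^ 2) / 2 * gph z := by
    apply integrable_bdd_mul_gph
      (((continuous_const.sub htc).mul (continuous_const.sub (htc.pow 2))).div_const 2) 2
    intro z
    have h1 : t z < 1 := tanh_lt_one _
    have h2 : -1 < t z := neg_one_lt_tanh _
    have h3 : 0 < 1 - t z ^ 2 := by nlinarith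
    show |(1 - t z) * (1 - t z ^ 2) / 2| ≤ 2
    rw [abs_of_nonneg (by nlinarith : (0:ℝ) ≤ (1 - t z) * (1 - t z ^ 2) / 2)]
    nlinarith
  apply (integral_pos_iff_support_of_nonneg (fun z => (hpos z).le) hint).2
  have hsupp : (Function.support fun z => (1 - t z) * (1 - t z ^ 2) / 2 * gph z) = Set.univ :=
    Set.eq_univ_of_forall fun z => (hpos z).ne'
  rw [hsupp, Real.volume_univ]
  exact ENNReal.zero_lt_top

lemma psi_strictMonoOn : StrictMonoOn psi (Ioi (0:ℝ)) := by
  apply strictMonoOn_of_deriv_pos (convex_Ioi 0)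
  · intro x hx
    exact ((psi_hasDerivAt hx).continuousAt).continuousWithinAt
  · intro x hx
    rw [interior_Ioi] at hx
    rw [(psi_hasDerivAt hx).deriv]
    exact deriv_pos hx

lemma psi_tendsto_zero : Tendsto psi (𝓝[>] (0:ℝ)) (𝓝 0) := by
  have key : Tendsto (fun γ => ∫ z, Real.tanh (γ / 2 + Real.sqrt (2 * γ) / 2 * z) * gph z)
      (𝓝[>] (0:ℝ)) (𝓝 (∫ z : ℝ, (0:ℝ))) := by
    apply tendsto_integral_filter_of_dominated_convergence gph
    · apply Eventually.of_forall
      intro γ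
      exact ((continuous_tanh.comp (by continuity)).mul continuous_gph).aestronglyMeasurable
    · apply Eventually.of_forall
      intro γ
      apply Eventually.of_forall
      intro z
      rw [Real.norm_eq_abs, abs_mul, abs_of_pos (gph_pos z)]
      have h1 := abs_tanh_le_one (γ / 2 + Real.sqrt (2 * γ) / 2 * z)
      nlinarith [gph_pos z, abs_nonneg (Real.tanh (γ / 2 + Real.sqrt (2 * γ) / 2 * z))]
    · exact integrable_gph
    · apply Eventually.of_forall
      intro z
      have hcont : ContinuousAt
          (fun γ : ℝ => Real.tanh (γ / 2 + Real.sqrt (2 * γ) / 2 * z) * gph z) 0 := by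
        apply ContinuousAt.mul _ continuousAt_const
        apply Continuous.continuousAt
        apply continuous_tanh.comp
        continuity
      have h0 : Real.tanh ((0:ℝ) / 2 + Real.sqrt (2 * 0) / 2 * z) * gph z = 0 := by
        norm_num
      have h2 := hcont.tendsto
      rw [h0] at h2
      exact h2.mono_left nhdsWithin_le_nhds
  rw [integral_zero] at key
  have heq : (fun γ => ∫ z, Real.tanh (γ / 2 + Real.sqrt (2 * γ) / 2 * z) * gph z)
      =ᶠ[𝓝[>] (0:ℝ)] psi := by
    filter_upwards [self_mem_nhdsWithin] with γ hγ
    exact (psi_z_rep hγ).symm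
  exact Tendsto.congr' heq key

lemma psi_nonneg {γ : ℝ} (hγ : 0 < γ) : 0 ≤ psi γ := by
  have hev : ∀ᶠ t in 𝓝[>] (0:ℝ), psi t ≤ psi γ := by
    filter_upwards [self_mem_nhdsWithin, mem_nhdsWithin_of_mem_nhds (Iio_mem_nhds hγ)]
      with t ht1 ht2
    exact (psi_strictMonoOn ht1 hγ ht2).le
  exact le_of_tendsto psi_tendsto_zero hev

lemma psi_pos {γ : ℝ} (hγ : 0 < γ) : 0 < psi γ :=
  lt_of_le_of_lt (psi_nonneg (half_pos hγ))
    (psi_strictMonoOn (half_pos hγ) hγ (half_lt_self hγ))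

lemma psi_lt_one {γ : ℝ} (hγ : 0 < γ) : psi γ < 1 := by
  rw [psi_z_rep hγ]
  set t : ℝ → ℝ := fun z => Real.tanh (γ / 2 + Real.sqrt (2 * γ) / 2 * z) with ht_def
  have htc : Continuous t := continuous_tanh.comp (by continuity)
  have hint : Integrable fun z => t z * gph z :=
    integrable_bdd_mul_gph htc 1 fun z => abs_tanh_le_one _
  have hbnd : ∀ z, |1 - t z| ≤ 2 := by
    intro z
    have h1 : t z < 1 := tanh_lt_one _
    have h2 : -1 < t z := neg_one_lt_tanh _
    rw [abs_le]
    constructor <;> linarith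
  have hint2 : Integrable fun z => (1 - t z) * gph z :=
    integrable_bdd_mul_gph (continuous_const.sub htc) 2 hbnd
  have hpos : ∀ z, 0 < (1 - t z) * gph z := by
    intro z
    have h1 : t z < 1 := tanh_lt_one _
    exact mul_pos (by linarith) (gph_pos z)
  have h1 : 0 < ∫ z, (1 - t z) * gph z := by
    apply (integral_pos_iff_support_of_nonneg (fun z => (hpos z).le) hint2).2
    have hsupp : (Function.support fun z => (1 - t z) * gph z) = Set.univ :=
      Set.eq_univ_of_forall fun z => (hpos z).ne'
    rw [hsupp, Real.volume_univ]
    exact ENNReal.zero_lt_top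
  have h2 : ∫ z, (1 - t z) * gph z = 1 - ∫ z, t z * gph z := by
    calc ∫ z, (1 - t z) * gph z = ∫ z, (gph z - t z * gph z) := by
          congr 1; funext z; ring
      _ = (∫ z, gph z) - ∫ z, t z * gph z := integral_sub integrable_gph hint
      _ = 1 - ∫ z, t z * gph z := by rw [integral_gph]
  linarith

end PsiAux

theorem Xi_well_defined_and_decreasing (γ : ℝ) (hγ : 0 < γ) :
    ∃ γ' : ℝ, 0 < γ' ∧ psi γ' = (psi γ) ^ 2 ∧ γ' < γ ∧
      ∀ γ'' : ℝ, 0 < γ'' → psi γ'' = (psi γ) ^ 2 → γ'' = γ' := by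
  have hψpos := PsiAux.psi_pos hγ
  have hψlt1 := PsiAux.psi_lt_one hγ
  set y := psi γ ^ 2 with hy
  have hy0 : 0 < y := by positivity
  have hylt : y < psi γ := by nlinarith
  have hev : ∀ᶠ t in 𝓝[>] (0:ℝ), psi t < y :=
    PsiAux.psi_tendsto_zero.eventually_lt_const hy0
  obtain ⟨t0, ht0pos, ht0lt, ht0val⟩ :
      ∃ t0 : ℝ, 0 < t0 ∧ t0 < γ ∧ psi t0 < y := by
    have h2 : ∀ᶠ t in 𝓝[>] (0:ℝ), 0 < t ∧ t < γ ∧ psi t < y := by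
      filter_upwards [self_mem_nhdsWithin,
        mem_nhdsWithin_of_mem_nhds (Iio_mem_nhds hγ), hev] with t h1 h2 h3
      exact ⟨h1, h2, h3⟩
    simpa using h2.exists
  have hcont : ContinuousOn psi (Set.Icc t0 γ) := by
    intro x hx
    exact ((PsiAux.psi_hasDerivAt (lt_of_lt_of_le ht0pos hx.1)).continuousAt).continuousWithinAt
  have hy_mem : y ∈ Set.Icc (psi t0) (psi γ) := ⟨ht0val.le, hylt.le⟩
  obtain ⟨γ', hγ'mem, hγ'val⟩ := intermediate_value_Icc ht0lt.le hcont hy_mem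
  have hγ'pos : 0 < γ' := lt_of_lt_of_le ht0pos hγ'mem.1
  have hγ'lt : γ' < γ := by
    rcases lt_or_eq_of_le hγ'mem.2 with hlt | heq
    · exact hlt
    · exfalso
      rw [heq] at hγ'val
      linarith
  refine ⟨γ', hγ'pos, hγ'val, hγ'lt, ?_⟩
  intro γ'' hγ''pos hγ''val
  exact PsiAux.psi_strictMonoOn.injOn (Set.mem_Ioi.2 hγ''pos) (Set.mem_Ioi.2 hγ'pos)
    (by rw [hγ''val, hγ'val])
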